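/- Let (E, f, w, W) be an MSK instance, let A be the output of a greedy execution on it, and let V be the associated value function. Let S* ⊆ E be nonempty with w(S*) ≤ W and f_∅(S*) > 0. Then for every u ∈ [0, min( W − max_{e∈S*} w(e), w(A) )] it holds that V(u) ≥ (1 − exp(−u/W))·f(S*). -/

import Mathlib

open Finset

variable {α : Type*}

/-- A set function `f` is submodular on ground set `E`. -/
def SubmodularOn [DecidableEq α] (E : Finset α) (f : Finset α → ℝ) : Prop :=
  ∀ A B : Finset α, A ⊆ B → B ⊆ E → ∀ e ∈ E, e ∉ B →
    f (insert e B) - f B ≤ f (insert e A) - f A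

/-- A set function `f` is monotone on ground set `E`. -/
def MonotoneOnSets (E : Finset α) (f : Finset α → ℝ) : Prop :=
  ∀ S T : Finset α, S ⊆ T → T ⊆ E → f S ≤ f T

/-- A set function `f` is non-negative on ground set `E`. -/
def NonnegOn (E : Finset α) (f : Finset α → ℝ) : Prop :=
  ∀ S : Finset α, S ⊆ E → 0 ≤ f S

/-- Total weight of a set. -/
def wt (w : α → ℝ) (S : Finset α) : ℝ := ∑ e ∈ S, w e

/-- Marginal value `f_A(S) = f(A ∪ S) - f(A)`. -/
def marginal [DecidableEq α] (f : Finset α → ℝ) (A S : Finset α) : ℝ := f (A ∪ S) - f A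

/-- A greedy execution on the MSK instance `(E, f, w, W)`: an ordering `e_1, …, e_n`
of the elements of `E` (here `order`, 0-indexed) together with sets
`sol 0 = ∅ ⊆ sol 1 ⊆ … ⊆ sol n` such that at every step the considered element maximizes
the marginal density among the remaining elements, and it is added iff it fits. -/
structure GreedyExec [DecidableEq α] (E : Finset α) (f : Finset α → ℝ) (w : α → ℝ)
    (W : ℝ) where
  order : List α
  nodup : order.Nodup
  ground : order.toFinset = E
  sol : ℕ → Finset α
  sol_zero : sol 0 = ∅
  greedy_max : ∀ (i : ℕ) (hi : i < order.length), ∀ e ∈ order.drop i,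
    marginal f (sol i) {e} / w e ≤
      marginal f (sol i) {order.get ⟨i, hi⟩} / w (order.get ⟨i, hi⟩)
  step_add : ∀ (i : ℕ) (hi : i < order.length),
    wt w (sol i) + w (order.get ⟨i, hi⟩) ≤ W →
      sol (i + 1) = insert (order.get ⟨i, hi⟩) (sol i)
  step_skip : ∀ (i : ℕ) (hi : i < order.length),
    W < wt w (sol i) + w (order.get ⟨i, hi⟩) → sol (i + 1) = sol i

/-- The output of a greedy execution. -/
def GreedyExec.out [DecidableEq α] {E : Finset α} {f : Finset α → ℝ} {w : α → ℝ} {W : ℝ}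
    (g : GreedyExec E f w W) : Finset α := g.sol g.order.length


private lemma exp_step {W ui v c fi ρ : ℝ} (hW : 0 < W) (hc : 0 < c)
    (hρ : 0 ≤ ρ) (huiv : ui ≤ v) (hWρ : c - fi ≤ W * ρ)
    (hIH : (1 - Real.exp (-ui / W)) * c ≤ fi) :
    (1 - Real.exp (-v / W)) * c ≤ fi + (v - ui) * ρ := by
  have hE1 : 0 < Real.exp (-ui / W) := Real.exp_pos _
  have hEv : 0 < Real.exp (-v / W) := Real.exp_pos _
  rcases le_or_gt c fi with hcf | hcf
  · have h1 : (1 - Real.exp (-v / W)) * c ≤ c := by nlinarith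
    have h2 : 0 ≤ (v - ui) * ρ := mul_nonneg (by linarith) hρ
    linarith
  · have ht0 : (0:ℝ) ≤ (v - ui) / W := div_nonneg (by linarith) hW.le
    have hE2 : 0 < Real.exp (-((v - ui) / W)) := Real.exp_pos _
    have hexp : 1 - (v - ui) / W ≤ Real.exp (-((v - ui) / W)) := by
      have := Real.add_one_le_exp (-((v - ui) / W)); linarith
    have hsplit : Real.exp (-v / W)
        = Real.exp (-ui / W) * Real.exp (-((v - ui) / W)) := by
      rw [← Real.exp_add]
      congr 1
      field_simp
      ring
    have hIH' : c - fi ≤ c * Real.exp (-ui / W) := by nlinarith [hIH]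
    have hfinal : (c - fi) * (1 - (v - ui) / W)
        ≤ c * Real.exp (-ui / W) * Real.exp (-((v - ui) / W)) := by
      rcases le_or_gt (1 - (v - ui) / W) 0 with hneg | hpos
      · nlinarith [mul_pos (mul_pos hc hE1) hE2,
          mul_nonneg (show (0:ℝ) ≤ c - fi by linarith)
            (show (0:ℝ) ≤ (v - ui) / W - 1 by linarith)]
      · have hA1 : (c - fi) * (1 - (v - ui) / W)
            ≤ c * Real.exp (-ui / W) * (1 - (v - ui) / W) :=
          mul_le_mul_of_nonneg_right hIH' hpos.le
        have hA2 : c * Real.exp (-ui / W) * (1 - (v - ui) / W)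
            ≤ c * Real.exp (-ui / W) * Real.exp (-((v - ui) / W)) :=
          mul_le_mul_of_nonneg_left hexp (by positivity)
        linarith
    have h3 : (v - ui) * ((c - fi) / W) ≤ (v - ui) * ρ :=
      mul_le_mul_of_nonneg_left (by rw [div_le_iff₀ hW]; linarith) (by linarith)
    have hteq : (v - ui) * ((c - fi) / W) = ((v - ui) / W) * (c - fi) := by
      ring
    rw [hsplit]
    nlinarith [hfinal, h3, hteq]


private lemma submod_sum_bound [DecidableEq α] {E : Finset α} {f : Finset α → ℝ}
    (hmono : MonotoneOnSets E f) (hsub : SubmodularOn E f) {A : Finset α} (hA : A ⊆ E) :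
    ∀ T : Finset α, T ⊆ E → f (A ∪ T) - f A ≤ ∑ e ∈ T, (f (insert e A) - f A) := by
  intro T
  induction T using Finset.induction_on with
  | empty => intro _; simp
  | @insert e T he ih =>
    intro hTE
    have heE : e ∈ E := hTE (mem_insert_self e T)
    have hTE' : T ⊆ E := (subset_insert e T).trans hTE
    have hAT : A ∪ T ⊆ E := union_subset hA hTE'
    have hkey : f (A ∪ insert e T) - f (A ∪ T) ≤ f (insert e A) - f A := by
      by_cases heA : e ∈ A ∪ T
      · have h1 : A ∪ insert e T = A ∪ T := by
          rw [Finset.union_insert, Finset.insert_eq_self.mpr heA]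
        have h2 : f A ≤ f (insert e A) :=
          hmono A (insert e A) (subset_insert e A) (insert_subset heE hA)
        rw [h1]; linarith
      · have := hsub A (A ∪ T) subset_union_left hAT e heE heA
        rw [Finset.union_insert]; exact this
    rw [Finset.sum_insert he]
    have := ih hTE'
    linarith

/-- k = 1 case of the bounding-function lemma; Sviridenko's analysis:
if `V` is the value function of a greedy execution with output `A`, and `S* ⊆ E` is
nonempty with `w(S*) ≤ W` and `f_∅(S*) > 0`, then for every
`u ∈ [0, min(W - max_{e∈S*} w(e), w(A))]` we have `V(u) ≥ (1 - exp(-u/W))·f(S*)`. -/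
theorem value_function_sviridenko_bound [DecidableEq α]
    (E : Finset α) (f : Finset α → ℝ) (w : α → ℝ) (W : ℝ)
    (hf0 : NonnegOn E f) (hmono : MonotoneOnSets E f) (hsub : SubmodularOn E f)
    (hw : ∀ e ∈ E, 0 < w e) (hW : 0 < W)
    (g : GreedyExec E f w W)
    (V : ℝ → ℝ)
    (hV : ∀ (i : ℕ) (hi : i < g.order.length), ∀ u : ℝ,
      wt w (g.sol i) ≤ u → u ≤ wt w (g.sol (i + 1)) →
      V u = f (g.sol i) + (u - wt w (g.sol i)) *
        (marginal f (g.sol i) {g.order.get ⟨i, hi⟩} / w (g.order.get ⟨i, hi⟩)))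
    (Sstar : Finset α) (hSE : Sstar ⊆ E) (hSne : Sstar.Nonempty)
    (hSw : wt w Sstar ≤ W) (hSpos : 0 < marginal f ∅ Sstar) :
    ∀ u : ℝ, 0 ≤ u → u ≤ min (W - Sstar.sup' hSne w) (wt w g.out) →
      (1 - Real.exp (-u / W)) * f Sstar ≤ V u := by
  intro u hu0 hu
  set n := g.order.length with hn
  have hcpos : 0 < f Sstar := by
    have h0 : 0 ≤ f (∅ : Finset α) := hf0 ∅ (empty_subset E)
    have he : (∅ : Finset α) ∪ Sstar = Sstar := Finset.empty_union Sstar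
    simp only [marginal, he] at hSpos
    linarith
  have hsolE : ∀ i, i ≤ n → g.sol i ⊆ E := by
    intro i
    induction i with
    | zero => intro _; rw [g.sol_zero]; exact empty_subset E
    | succ i ih =>
      intro h
      have hi : i < n := h
      have hiE : g.sol i ⊆ E := ih hi.le
      have he : g.order.get ⟨i, hi⟩ ∈ E := by
        have h' := List.mem_toFinset.mpr (List.get_mem g.order ⟨i, hi⟩)
        rwa [g.ground] at h'
      rcases le_or_gt (wt w (g.sol i) + w (g.order.get ⟨i, hi⟩)) W with hle | hlt
      · rw [g.step_add i hi hle]; exact insert_subset he hiE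
      · rw [g.step_skip i hi hlt]; exact hiE
  have hstep : ∀ i, i < n → g.sol i ⊆ g.sol (i + 1) := by
    intro i hi
    rcases le_or_gt (wt w (g.sol i) + w (g.order.get ⟨i, hi⟩)) W with hle | hlt
    · rw [g.step_add i hi hle]; exact subset_insert _ _
    · rw [g.step_skip i hi hlt]
  have hsolmono : ∀ j, j ≤ n → ∀ i, i ≤ j → g.sol i ⊆ g.sol j := by
    intro j
    induction j with
    | zero => intro _ i hi; rw [Nat.le_zero.mp hi]
    | succ j ih =>
      intro hj i hi
      rcases Nat.lt_or_ge i (j + 1) with h | h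
      · exact (ih (Nat.le_of_succ_le hj) i (Nat.lt_succ_iff.mp h)).trans (hstep j hj)
      · rw [le_antisymm hi h]
  have hwtnn : ∀ S : Finset α, S ⊆ E → 0 ≤ wt w S := by
    intro S hS
    exact Finset.sum_nonneg fun e he => (hw e (hS he)).le
  have hwtmono : ∀ i j, i ≤ j → j ≤ n → wt w (g.sol i) ≤ wt w (g.sol j) := by
    intro i j hij hjn
    exact Finset.sum_le_sum_of_subset_of_nonneg (hsolmono j hjn i hij)
      (fun e he _ => (hw e (hsolE j hjn he)).le)
  have hord_ne : g.order ≠ [] := by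
    intro h
    have hE : E = ∅ := by rw [← g.ground, h]; rfl
    obtain ⟨e, he⟩ := hSne
    exact (Finset.notMem_empty e) (hE ▸ hSE he)
  have hnpos : 0 < n := List.length_pos_iff.mpr hord_ne
  have hwt0 : wt w (g.sol 0) = 0 := by rw [g.sol_zero]; simp [wt]
  have key : ∀ i, i ≤ n → ∀ v : ℝ, 0 ≤ v → v ≤ W - Sstar.sup' hSne w →
      v ≤ wt w (g.sol i) → (1 - Real.exp (-v / W)) * f Sstar ≤ V v := by
    intro i
    induction i with
    | zero =>
      intro _ v hv0 _ hvle
      rw [hwt0] at hvle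
      have hv : v = 0 := le_antisymm hvle hv0
      subst hv
      have hV0 : V 0 = f (g.sol 0) := by
        have h01 : wt w (g.sol 0) ≤ wt w (g.sol 1) :=
          hwtmono 0 1 (Nat.zero_le 1) hnpos
        have := hV 0 hnpos 0 (le_of_eq hwt0) (hwt0 ▸ h01)
        rw [this, hwt0]; ring
      rw [hV0, g.sol_zero]
      have : (1 - Real.exp (-(0:ℝ) / W)) = 0 := by
        rw [neg_zero, zero_div, Real.exp_zero, sub_self]
      rw [this, zero_mul]
      exact hf0 ∅ (empty_subset E)
    | succ i ih =>
      intro h1 v hv0 hvsup hvle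
      have hi : i < n := h1
      rcases le_or_gt v (wt w (g.sol i)) with hcase | hcase
      · exact ih hi.le v hv0 hvsup hcase
      · set ei := g.order.get ⟨i, hi⟩ with hei
        set ui := wt w (g.sol i) with hui
        set ρ := marginal f (g.sol i) {ei} / w ei with hρ
        have hsoliE : g.sol i ⊆ E := hsolE i hi.le
        have heiE : ei ∈ E := by
          have h' := List.mem_toFinset.mpr (List.get_mem g.order ⟨i, hi⟩)
          rwa [g.ground] at h'
        have hVv : V v = f (g.sol i) + (v - ui) * ρ := hV i hi v hcase.le hvle
        have hρ0 : 0 ≤ ρ := by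
          apply div_nonneg _ (hw ei heiE).le
          have hsubE : g.sol i ∪ {ei} ⊆ E :=
            union_subset hsoliE (Finset.singleton_subset_iff.mpr heiE)
          have h' := hmono (g.sol i) (g.sol i ∪ {ei}) subset_union_left hsubE
          simp only [marginal]
          linarith
        -- every element of Sstar not yet chosen is still available
        have hdrop : ∀ e ∈ Sstar, e ∉ g.sol i → e ∈ g.order.drop i := by
          intro e he hes
          have heord : e ∈ g.order := by
            rw [← List.mem_toFinset, g.ground]; exact hSE he
          have hwe_le : w e ≤ Sstar.sup' hSne w := Finset.le_sup' w he
          by_contra hnot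
          have htake : e ∈ g.order.take i := by
            have h' : e ∈ g.order.take i ++ g.order.drop i := by
              rw [List.take_append_drop]; exact heord
            rcases List.mem_append.mp h' with h'' | h''
            · exact h''
            · exact absurd h'' hnot
          obtain ⟨j, hj, hje⟩ := List.getElem_of_mem htake
          have hjlen : j < (g.order.take i).length := hj
          rw [List.length_take] at hjlen
          have hji : j < i := lt_of_lt_of_le hjlen (min_le_left _ _)
          have hjn : j < n := hji.trans hi
          have hje' : g.order.get ⟨j, hjn⟩ = e := by
            rw [List.getElem_take] at hje
            simpa [List.get_eq_getElem] using hje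
          have hwtj : wt w (g.sol j) ≤ ui := hwtmono j i hji.le hi.le
          rcases le_or_gt (wt w (g.sol j) + w (g.order.get ⟨j, hjn⟩)) W with hfit | hskip
          · have hadd := g.step_add j hjn hfit
            rw [hje'] at hadd
            have : e ∈ g.sol i :=
              hsolmono i hi.le (j + 1) hji (hadd ▸ mem_insert_self e (g.sol j))
            exact hes this
          · rw [hje'] at hskip
            linarith
        have hsum := submod_sum_bound hmono hsub hsoliE Sstar hSE
        have hterm : ∀ e ∈ Sstar, f (insert e (g.sol i)) - f (g.sol i) ≤ w e * ρ := by
          intro e he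
          by_cases hes : e ∈ g.sol i
          · rw [Finset.insert_eq_self.mpr hes]
            have : 0 ≤ w e * ρ := mul_nonneg (hw e (hSE he)).le hρ0
            linarith
          · have hg := g.greedy_max i hi e (hdrop e he hes)
            have hwe : 0 < w e := hw e (hSE he)
            have hm : marginal f (g.sol i) {e} = f (insert e (g.sol i)) - f (g.sol i) := by
              have hu' : g.sol i ∪ {e} = insert e (g.sol i) := by
                rw [Finset.union_comm, ← Finset.insert_eq]
              simp only [marginal, hu']
            rw [← hm]
            have := (div_le_iff₀ hwe).mp hg
            linarith [this]
        have hsum2 : ∑ e ∈ Sstar, (f (insert e (g.sol i)) - f (g.sol i)) ≤ wt w Sstar * ρ := by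
          calc ∑ e ∈ Sstar, (f (insert e (g.sol i)) - f (g.sol i))
              ≤ ∑ e ∈ Sstar, w e * ρ := Finset.sum_le_sum hterm
            _ = wt w Sstar * ρ := by simp only [wt]; rw [Finset.sum_mul]
        have hWρ : f Sstar - f (g.sol i) ≤ W * ρ := by
          have hmono' : f Sstar ≤ f (g.sol i ∪ Sstar) :=
            hmono Sstar (g.sol i ∪ Sstar) subset_union_right (union_subset hsoliE hSE)
          have : wt w Sstar * ρ ≤ W * ρ := mul_le_mul_of_nonneg_right hSw hρ0
          linarith
        have hui0 : 0 ≤ ui := hwtnn _ hsoliE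
        have huisup : ui ≤ W - Sstar.sup' hSne w := le_of_lt (lt_of_lt_of_le hcase hvsup)
        have hVui : V ui = f (g.sol i) := by
          have h01 : ui ≤ wt w (g.sol (i + 1)) := hwtmono i (i + 1) (Nat.le_succ i) h1
          rw [hV i hi ui le_rfl h01]; ring
        have hIH : (1 - Real.exp (-ui / W)) * f Sstar ≤ f (g.sol i) :=
          hVui ▸ ih hi.le ui hui0 huisup le_rfl
        rw [hVv]
        exact exp_step hW hcpos hρ0 hcase.le hWρ hIH
  have hout : u ≤ wt w (g.sol n) := by
    have := hu.trans (min_le_right _ _)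
    simpa [GreedyExec.out] using this
  exact key n le_rfl u hu0 (hu.trans (min_le_left _ _)) hout
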